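/- Under round-robin assignment of sorted slices, in any iteration t the loads of the processors, read cyclically starting from p_t = t mod P, are in non-decreasing order, and the difference between the largest and smallest load is at most |S_t|. -/

import Mathlib

lemma predSuccMod (P : ℕ) (hP : 0 < P) (m : ℕ) :
    ((m + 1) % P + P - 1) % P = m % P := by
  have h1 : (m + 1) % P + P - 1 = (m + 1) % P + (P - 1) := by omega
  rw [h1, Nat.mod_add_mod]
  have h2 : m + 1 + (P - 1) = m + P := by omega
  rw [h2, Nat.add_mod_right]

lemma modAddNe (P : ℕ) (q k : ℕ) (hq : q < P) (hk : 0 < k) (hkP : k < P) :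
    (q + k) % P ≠ q := by
  intro hEq
  have h0 : (q + k) % P = (q + 0) % P := by
    simpa [Nat.mod_eq_of_lt hq] using hEq
  have h1 : k ≡ 0 [MOD P] := Nat.ModEq.add_left_cancel' q h0
  have h2 : P ∣ k := Nat.dvd_of_mod_eq_zero (by simpa [Nat.ModEq] using h1)
  have := Nat.le_of_dvd hk h2
  omega

lemma cycMin (P : ℕ) (hP : 0 < P) (f : ℕ → ℕ) (q : ℕ) (hq : q < P)
    (ha : ∀ p < P, p ≠ q → f ((p + P - 1) % P) ≤ f p) :
    ∀ p < P, f q ≤ f p := by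
  have key : ∀ k, k < P → f q ≤ f ((q + k) % P) := by
    intro k
    induction k with
    | zero => intro _; simp [Nat.mod_eq_of_lt hq]
    | succ k ih =>
      intro hk
      have h1 : f q ≤ f ((q + k) % P) := ih (by omega)
      have hpP : (q + (k + 1)) % P < P := Nat.mod_lt _ hP
      have hpq : (q + (k + 1)) % P ≠ q := modAddNe P q (k + 1) hq (by omega) hk
      have hpred : ((q + (k + 1)) % P + P - 1) % P = (q + k) % P := by
        have h2 : q + (k + 1) = (q + k) + 1 := by omega
        rw [h2]
        exact predSuccMod P hP (q + k)
      have h3 := ha _ hpP hpq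
      rw [hpred] at h3
      exact le_trans h1 h3
  intro p hpP
  rcases eq_or_ne p q with hpq | hpq
  · simp [hpq]
  · have hk : (q + (p + P - q) % P) % P = p := by
      rw [Nat.add_mod_mod]
      have h1 : q + (p + P - q) = p + P := by omega
      rw [h1, Nat.add_mod_right, Nat.mod_eq_of_lt hpP]
    have := key ((p + P - q) % P) (Nat.mod_lt _ hP)
    rwa [hk] at this

/-- Under round-robin assignment of sorted slices, in any iteration `t` the
loads of the processors, read cyclically starting from `p_t = t % P`, are in
non-decreasing order, and the difference between the largest load (at `p_t ⊖ 1`) and the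
smallest load (at `p_t`) is at most `s t`. -/
theorem stmt2 (P : ℕ) (hP : 0 < P) (s : ℕ → ℕ) (hmono : Monotone s)
    (h : ℕ → ℕ → ℕ)
    (hinit : ∀ p, h 0 p = 0)
    (hstep : ∀ t p, h (t + 1) p = h t p + (if p = t % P then s t else 0)) :
    ∀ t,
      (∀ p < P, p ≠ t % P → h t ((p + P - 1) % P) ≤ h t p) ∧
      h t ((t % P + P - 1) % P) - h t (t % P) ≤ s t := by
  intro t
  induction t with
  | zero =>
    constructor
    · intro p _ _; simp [hinit]
    · simp [hinit]
  | succ t ih =>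
    obtain ⟨ihA, ihB⟩ := ih
    have hq : t % P < P := Nat.mod_lt _ hP
    by_cases hP1 : P = 1
    · subst hP1
      constructor
      · intro p hp hne
        omega
      · simp [Nat.mod_one]
    · -- P ≥ 2
      have hP2 : 2 ≤ P := by omega
      have hmin : ∀ p < P, h t (t % P) ≤ h t p := cycMin P hP (h t) (t % P) hq ihA
      have hq'q : (t + 1) % P ≠ t % P := by
        have h1 : (t % P + 1) % P = (t + 1) % P := Nat.mod_add_mod t P 1
        rw [← h1]
        exact modAddNe P (t % P) 1 hq one_pos (by omega)
      constructor
      · intro p hpP hpq'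
        by_cases hpq : p = t % P
        · have hne : (p + P - 1) % P ≠ t % P := by
            rw [hpq]
            have h1 : t % P + P - 1 = t % P + (P - 1) := by omega
            rw [h1]
            exact modAddNe P (t % P) (P - 1) hq (by omega) (by omega)
          rw [hstep, hstep, if_neg hne, if_pos hpq, add_zero, hpq]
          omega
        · have hne : (p + P - 1) % P ≠ t % P := by
            intro hcontra
            apply hpq'
            have h1 : ((p + P - 1) % P + 1) % P = (t % P + 1) % P := by rw [hcontra]
            rw [Nat.mod_add_mod, Nat.mod_add_mod] at h1
            have h2 : p + P - 1 + 1 = p + P := by omega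
            rw [h2, Nat.add_mod_right, Nat.mod_eq_of_lt hpP] at h1
            omega
          rw [hstep, hstep, if_neg hne, if_neg hpq, add_zero, add_zero]
          exact ihA p hpP hpq
      · have e1 : h (t + 1) (t % P) = h t (t % P) + s t := by
          rw [hstep]; simp
        have e2 : h (t + 1) ((t + 1) % P) = h t ((t + 1) % P) := by
          rw [hstep, if_neg hq'q, add_zero]
        rw [predSuccMod P hP t, e1, e2]
        have h1 : h t (t % P) ≤ h t ((t + 1) % P) := hmin _ (Nat.mod_lt _ hP)
        have h2 : s t ≤ s (t + 1) := hmono (by omega)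
        omega
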